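/- The (k+1)-limited propagating D0L system over {a,b,c} with axiom c and rules a→bb, b→b, c→a^{(k+1)m} generates exactly the language L_m = {c} ∪ {x₁⋯x_{(k+1)m} | x_i ∈ {a,bb}, the number of a-blocks is a multiple of k+1}, for all k ≥ 1 and m ≥ 1. -/

import Mathlib

/-- One k-limited derivation step: for each letter x, exactly min(k, |v|_x) occurrences
of x in v are rewritten, each by some rule of R with left side x; the remaining
occurrences stay unchanged. -/
def klStep {V : Type*} [DecidableEq V] (k : ℕ) (R : Set (V × List V)) (v w : List V) : Prop :=
  ∃ (S : Finset (Fin v.length)) (f : Fin v.length → List V),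
    (∀ x : V, (S.filter (fun i => v.get i = x)).card = min k (v.count x)) ∧
    (∀ i ∈ S, (v.get i, f i) ∈ R) ∧
    (∀ i, i ∉ S → f i = [v.get i]) ∧
    w = (List.ofFn f).flatten

/-- Deterministic k-limited step with rule function P. -/
def detStep {V : Type*} [DecidableEq V] (k : ℕ) (P : V → List V) : List V → List V → Prop :=
  klStep k {p | p.2 = P p.1}

/-- The language generated from axiom ω by a step relation. -/
def lang {V : Type*} (step : List V → List V → Prop) (ω : List V) : Set (List V) :=
  {w | Relation.ReflTransGen step ω w}

inductive V3 : Type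
  | a | b | c
deriving DecidableEq

instance instFintypeV3 : Fintype V3 :=
  ⟨{V3.a, V3.b, V3.c}, fun x => by cases x <;> simp⟩

open V3

/-- L_m = {c} ∪ {x₁⋯x_{(k+1)m} | xᵢ ∈ {a,bb}, number of a-blocks a multiple of k+1}. -/
def Lm (k m : ℕ) : Set (List V3) :=
  {[c]} ∪ {z | ∃ bs : List (List V3),
    bs.length = (k + 1) * m ∧ (∀ x ∈ bs, x = [a] ∨ x = [b, b]) ∧
    (∃ j ≤ m, bs.count [a] = (k + 1) * j) ∧ z = bs.flatten}

/-- The rules a→bb, b→b, c→a^{(k+1)m}. -/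
def P15 (k m : ℕ) : V3 → List V3
  | a => [b, b] | b => [b] | c => List.replicate ((k + 1) * m) a

abbrev mk3 (x : V3) (t : Bool) : List V3 := if t then [b, b] else [x]

def rew (v : List V3) (r : List Bool) : List V3 := (List.zipWith mk3 v r).flatten

lemma ofFn_zipWith {α β γ : Type*} : ∀ (v : List α) (f : Fin v.length → β) (g : α → β → γ),
    List.ofFn (fun i => g (v.get i) (f i)) = List.zipWith g v (List.ofFn f)
  | [], _, _ => by simp
  | x :: v, f, g => by
      rw [List.ofFn_succ]
      have h1 : (List.ofFn fun i : Fin v.length => g ((x :: v).get i.succ) (f i.succ))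
          = List.ofFn fun i : Fin v.length => g (v.get i) (f i.succ) := rfl
      rw [List.ofFn_succ (f := f)]
      simp only [List.zipWith_cons_cons]
      rw [← ofFn_zipWith v (fun i => f i.succ) g]
      exact congrArg₂ _ rfl h1

lemma count_ofFn {α : Type*} [DecidableEq α] (y : α) : ∀ {n : ℕ} (f : Fin n → α),
    (List.ofFn f).count y = (Finset.univ.filter (fun i => f i = y)).card := by
  intro n
  induction n with
  | zero => intro f; simp
  | succ n ih =>
    intro f
    rw [List.ofFn_succ, List.count_cons, ih, Finset.card_filter, Finset.card_filter,
      Fin.sum_univ_succ]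
    simp only [beq_iff_eq]
    omega

lemma count_get {α : Type*} [DecidableEq α] (v : List α) (y : α) :
    (Finset.univ.filter (fun i : Fin v.length => v.get i = y)).card = v.count y := by
  conv_rhs => rw [← List.ofFn_get v]
  rw [count_ofFn]

lemma step_iff (k m : ℕ) (v w : List V3) (hc : v.count c = 0) :
    detStep (k + 1) (P15 k m) v w ↔
      ∃ r : List Bool, List.Forall₂ (fun x t => t = true → x = a) v r ∧
        r.count true = min (k + 1) (v.count a) ∧ w = rew v r := by
  have hgc : ∀ i : Fin v.length, v.get i ≠ c := by
    intro i h
    apply List.count_eq_zero.mp hc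
    rw [← h]
    exact List.get_mem v i
  constructor
  · rintro ⟨S, f, hcard, hR, hout, rfl⟩
    set T : Finset (Fin v.length) := S.filter (fun i => v.get i = a) with hT
    have hf : ∀ i, f i = if i ∈ T then [b, b] else [v.get i] := by
      intro i
      by_cases hiS : i ∈ S
      · have hfi : f i = P15 k m (v.get i) := hR i hiS
        cases hx : v.get i with
        | a =>
          have hiT : i ∈ T := by rw [hT, Finset.mem_filter]; exact ⟨hiS, hx⟩
          rw [hfi, hx, if_pos hiT]; rfl
        | b =>
          have hiT : i ∉ T := by
            rw [hT, Finset.mem_filter]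
            rintro ⟨-, h⟩
            rw [hx] at h
            cases h
          rw [hfi, hx, if_neg hiT]; rfl
        | c => exact absurd hx (hgc i)
      · have : i ∉ T := by simp [hT, Finset.mem_filter, hiS]
        simp [this, hout i hiS]
    refine ⟨List.ofFn fun i => decide (i ∈ T), ?_, ?_, ?_⟩
    · rw [List.forall₂_iff_get]
      refine ⟨by simp, fun i h₁ h₂ => ?_⟩
      rw [List.get_ofFn]
      intro hd
      have : (⟨i, h₁⟩ : Fin v.length) ∈ T := by
        have := of_decide_eq_true hd
        convert this using 2
        rfl
      exact (Finset.mem_filter.mp this).2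
    · rw [count_ofFn]
      have : Finset.univ.filter (fun i => decide (i ∈ T) = true) = T := by
        ext i; simp
      rw [this, hT, hcard a]
    · have : f = fun i => mk3 (v.get i) (decide (i ∈ T)) := by
        funext i
        rw [hf i]
        by_cases h : i ∈ T <;> simp [h, mk3]
      rw [this, rew, ofFn_zipWith]
  · rintro ⟨r, hft, hcnt, rfl⟩
    have hlen : v.length = r.length := hft.length_eq
    have hget := (List.forall₂_iff_get.mp hft).2
    set T : Finset (Fin v.length) :=
      Finset.univ.filter (fun i : Fin v.length => r.get (Fin.cast hlen i) = true) with hT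
    have hTa : ∀ i ∈ T, v.get i = a := by
      intro i hi
      rw [hT, Finset.mem_filter] at hi
      exact hget i.val i.isLt (hlen ▸ i.isLt) hi.2
    have hTcard : T.card = r.count true := by
      rw [← count_get r true, hT]
      refine Finset.card_equiv (finCongr hlen) (fun i => ?_)
      simp
    have hbcard : (Finset.univ.filter (fun i : Fin v.length => v.get i = b)).card = v.count b :=
      count_get v b
    obtain ⟨B, hBsub, hBcard⟩ :=
      Finset.exists_subset_card_eq (s := Finset.univ.filter (fun i : Fin v.length => v.get i = b))
        (n := min (k + 1) (v.count b)) (by rw [hbcard]; exact Nat.min_le_right _ _)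
    have hBb : ∀ i ∈ B, v.get i = b := fun i hi => (Finset.mem_filter.mp (hBsub hi)).2
    refine ⟨T ∪ B, (fun i => if i ∈ T then [b, b] else [v.get i]), ?_, ?_, ?_, ?_⟩
    · intro x
      cases x with
      | a =>
        have : (T ∪ B).filter (fun i => v.get i = a) = T := by
          ext i
          simp only [Finset.mem_filter, Finset.mem_union]
          constructor
          · rintro ⟨hi | hi, hx⟩
            · exact hi
            · exact absurd hx (by rw [hBb i hi]; simp)
          · intro hi; exact ⟨Or.inl hi, hTa i hi⟩
        rw [this, hTcard, hcnt]
      | b =>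
        have : (T ∪ B).filter (fun i => v.get i = b) = B := by
          ext i
          simp only [Finset.mem_filter, Finset.mem_union]
          constructor
          · rintro ⟨hi | hi, hx⟩
            · exact absurd hx (by rw [hTa i hi]; simp)
            · exact hi
          · intro hi; exact ⟨Or.inr hi, hBb i hi⟩
        rw [this, hBcard]
      | c =>
        have : (T ∪ B).filter (fun i => v.get i = c) = ∅ := by
          ext i
          simp only [Finset.mem_filter, Finset.notMem_empty, iff_false, not_and]
          intro _
          exact hgc i
        rw [this, hc]
        simp
    · intro i hi
      rcases Finset.mem_union.mp hi with hi' | hi'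
      · show (if i ∈ T then [b, b] else [v.get i]) = P15 k m (v.get i)
        rw [if_pos hi', hTa i hi', P15]
      · show (if i ∈ T then [b, b] else [v.get i]) = P15 k m (v.get i)
        by_cases h : i ∈ T
        · rw [if_pos h, hTa i h, P15]
        · rw [if_neg h, hBb i hi', P15]
    · intro i hi
      show (if i ∈ T then [b, b] else [v.get i]) = [v.get i]
      rw [if_neg (fun h => hi (Finset.mem_union_left _ h))]
    · have hr : List.ofFn (fun i : Fin v.length => decide (i ∈ T)) = r := by
        apply List.ext_get (by simpa using hlen)
        intro i h₁ h₂
        rw [List.get_ofFn]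
        simp [hT]
      have : (fun i => if i ∈ T then [b, b] else [v.get i])
          = fun i => mk3 (v.get i) (decide (i ∈ T)) := by
        funext i
        by_cases h : i ∈ T <;> simp [h, mk3]
      rw [this, ofFn_zipWith, hr, rew]

lemma rew_cons (x : V3) (t : Bool) (v : List V3) (r : List Bool) :
    rew (x :: v) (t :: r) = mk3 x t ++ rew v r := by
  simp [rew]

lemma flatten_cons_a (tl : List (List V3)) : ([a] :: tl).flatten = a :: tl.flatten := by simp

lemma flatten_cons_bb (tl : List (List V3)) :
    ([b, b] :: tl).flatten = b :: b :: tl.flatten := by simp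

lemma soundC : ∀ (bs : List (List V3)) (r : List Bool),
    (∀ x ∈ bs, x = [a] ∨ x = [b, b]) →
    List.Forall₂ (fun x t => t = true → x = a) bs.flatten r →
    ∃ cs : List (List V3), cs.length = bs.length ∧ (∀ x ∈ cs, x = [a] ∨ x = [b, b]) ∧
      cs.count [a] + r.count true = bs.count [a] ∧ rew bs.flatten r = cs.flatten := by
  intro bs
  induction bs with
  | nil =>
    intro r _ hft
    cases hft
    exact ⟨[], by simp, by simp, by simp, by simp [rew]⟩
  | cons hd tl ih =>
    intro r hb hft
    have hhd := hb hd (by simp)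
    have htl : ∀ x ∈ tl, x = [a] ∨ x = [b, b] := fun x hx => hb x (by simp [hx])
    rcases hhd with rfl | rfl
    · rw [flatten_cons_a] at hft
      cases r with
      | nil => exact absurd hft.length_eq (by simp)
      | cons t r' =>
        obtain ⟨h1, h2⟩ := List.forall₂_cons.mp hft
        obtain ⟨cs, hlen, hcs, hcnt, heq⟩ := ih _ htl h2
        cases t with
        | true =>
          refine ⟨[b, b] :: cs, by simp [hlen], ?_, ?_, ?_⟩
          · intro x hx
            rcases List.mem_cons.mp hx with rfl | hx
            · right; rfl
            · exact hcs x hx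
          · simp [List.count_cons]
            omega
          · rw [flatten_cons_a, rew_cons, heq]
            simp [mk3]
        | false =>
          refine ⟨[a] :: cs, by simp [hlen], ?_, ?_, ?_⟩
          · intro x hx
            rcases List.mem_cons.mp hx with rfl | hx
            · left; rfl
            · exact hcs x hx
          · simp [List.count_cons]
            omega
          · rw [flatten_cons_a, rew_cons, heq]
            simp [mk3]
    · rw [flatten_cons_bb] at hft
      cases r with
      | nil => exact absurd hft.length_eq (by simp)
      | cons t1 rr =>
        obtain ⟨h1, hft2⟩ := List.forall₂_cons.mp hft
        cases rr with
        | nil => exact absurd hft2.length_eq (by simp)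
        | cons t2 r' =>
          obtain ⟨h3, h4⟩ := List.forall₂_cons.mp hft2
          obtain ⟨cs, hlen, hcs, hcnt, heq⟩ := ih _ htl h4
          have ht1 : t1 = false := by
            cases t1
            · rfl
            · exact absurd (h1 rfl) (by decide)
          have ht2 : t2 = false := by
            cases t2
            · rfl
            · exact absurd (h3 rfl) (by decide)
          subst ht1 ht2
          refine ⟨[b, b] :: cs, by simp [hlen], ?_, ?_, ?_⟩
          · intro x hx
            rcases List.mem_cons.mp hx with rfl | hx
            · right; rfl
            · exact hcs x hx
          · simp [List.count_cons]
            omega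
          · rw [flatten_cons_bb, rew_cons, rew_cons, heq]
            simp [mk3]

lemma complD : ∀ (bs cs : List (List V3)),
    List.Forall₂ (fun x y => x = y ∨ (x = [a] ∧ y = [b, b])) bs cs →
    (∀ x ∈ bs, x = [a] ∨ x = [b, b]) →
    ∃ r : List Bool, List.Forall₂ (fun x t => t = true → x = a) bs.flatten r ∧
      r.count true + cs.count [a] = bs.count [a] ∧ rew bs.flatten r = cs.flatten := by
  intro bs cs hf
  induction hf with
  | nil =>
    intro _
    exact ⟨[], by simp, by simp, by simp [rew]⟩
  | cons hxy hrest ih =>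
    rename_i x y bs' cs'
    intro hb
    have hx := hb x (by simp)
    obtain ⟨r', hft', hcnt', heq'⟩ := ih (fun z hz => hb z (by simp [hz]))
    rcases hx with rfl | rfl
    · rcases hxy with rfl | ⟨-, rfl⟩
      · refine ⟨false :: r', ?_, ?_, ?_⟩
        · rw [flatten_cons_a]
          exact List.Forall₂.cons (by simp) hft'
        · simp [List.count_cons]
          omega
        · rw [flatten_cons_a, rew_cons, heq']
          simp [mk3]
      · refine ⟨true :: r', ?_, ?_, ?_⟩
        · rw [flatten_cons_a]
          exact List.Forall₂.cons (by simp) hft'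
        · simp [List.count_cons]
          omega
        · rw [flatten_cons_a, rew_cons, heq']
          simp [mk3]
    · rcases hxy with rfl | ⟨h, -⟩
      · refine ⟨false :: false :: r', ?_, ?_, ?_⟩
        · rw [flatten_cons_bb]
          exact List.Forall₂.cons (by simp) (List.Forall₂.cons (by simp) hft')
        · simp [List.count_cons]
          omega
        · rw [flatten_cons_bb, rew_cons, rew_cons, heq']
          simp [mk3]
      · exact absurd h (by decide)

def repl : ℕ → List (List V3) → List (List V3)
  | 0, xs => xs
  | _ + 1, [] => []
  | n + 1, x :: xs => if x = [b, b] then [a] :: repl n xs else x :: repl (n + 1) xs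

lemma repl_forall₂ : ∀ (n : ℕ) (xs : List (List V3)),
    List.Forall₂ (fun x y => x = y ∨ (x = [a] ∧ y = [b, b])) (repl n xs) xs := by
  intro n xs
  induction xs generalizing n with
  | nil => cases n <;> exact List.Forall₂.nil
  | cons x xs ih =>
    cases n with
    | zero => exact List.forall₂_same.mpr (fun z _ => Or.inl rfl)
    | succ n =>
      by_cases h : x = [b, b]
      · rw [repl, if_pos h]
        exact List.Forall₂.cons (Or.inr ⟨rfl, h.symm ▸ rfl⟩) (ih n)
      · rw [repl, if_neg h]
        exact List.Forall₂.cons (Or.inl rfl) (ih (n + 1))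

lemma repl_blocks : ∀ (n : ℕ) (xs : List (List V3)),
    (∀ x ∈ xs, x = [a] ∨ x = [b, b]) → ∀ x ∈ repl n xs, x = [a] ∨ x = [b, b] := by
  intro n xs
  induction xs generalizing n with
  | nil => cases n <;> simp [repl]
  | cons y xs ih =>
    intro hb x hx
    cases n with
    | zero => exact hb x hx
    | succ n =>
      by_cases h : y = [b, b]
      · rw [repl, if_pos h] at hx
        rcases List.mem_cons.mp hx with rfl | hx
        · left; rfl
        · exact ih n (fun z hz => hb z (by simp [hz])) x hx
      · rw [repl, if_neg h] at hx
        rcases List.mem_cons.mp hx with rfl | hx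
        · exact hb x (by simp)
        · exact ih (n + 1) (fun z hz => hb z (by simp [hz])) x hx

lemma repl_count : ∀ (n : ℕ) (xs : List (List V3)),
    (repl n xs).count [a] = xs.count [a] + min n (xs.count [b, b]) := by
  intro n xs
  induction xs generalizing n with
  | nil => cases n <;> simp [repl]
  | cons y xs ih =>
    cases n with
    | zero => simp [repl]
    | succ n =>
      by_cases h : y = [b, b]
      · subst h
        rw [repl, if_pos rfl]
        simp [List.count_cons, ih n]
        omega
      · rw [repl, if_neg h]
        have hbb : ([b, b] : List V3) ≠ y := fun hh => h hh.symm
        simp [List.count_cons, ih (n + 1), h, hbb]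
        omega

lemma blocks_count_a (bs : List (List V3)) (hb : ∀ x ∈ bs, x = [a] ∨ x = [b, b]) :
    bs.flatten.count a = bs.count [a] := by
  induction bs with
  | nil => simp
  | cons hd tl ih =>
    have hhd := hb hd (by simp)
    have htl := ih (fun x hx => hb x (by simp [hx]))
    rcases hhd with rfl | rfl <;>
      simp [List.count_cons, List.count_append, htl]

lemma blocks_count_c (bs : List (List V3)) (hb : ∀ x ∈ bs, x = [a] ∨ x = [b, b]) :
    bs.flatten.count c = 0 := by
  induction bs with
  | nil => simp
  | cons hd tl ih =>
    have hhd := hb hd (by simp)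
    have htl := ih (fun x hx => hb x (by simp [hx]))
    rcases hhd with rfl | rfl <;>
      simp [List.count_cons, List.count_append, htl]

lemma blocks_count_sum (bs : List (List V3)) (hb : ∀ x ∈ bs, x = [a] ∨ x = [b, b]) :
    bs.count [a] + bs.count [b, b] = bs.length := by
  induction bs with
  | nil => simp
  | cons hd tl ih =>
    have hhd := hb hd (by simp)
    have htl := ih (fun x hx => hb x (by simp [hx]))
    rcases hhd with rfl | rfl <;> simp [List.count_cons] <;> omega

lemma flatten_replicate_a (n : ℕ) :
    (List.replicate n ([a] : List V3)).flatten = List.replicate n a := by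
  induction n with
  | zero => simp
  | succ n ih => simp [List.replicate_succ, ih]

lemma ofFn_one {α : Type*} {n : ℕ} (hn : n = 1) (f : Fin n → α) :
    List.ofFn f = [f ⟨0, by omega⟩] := by
  apply List.ext_get (by simp [hn])
  intro i h₁ h₂
  rw [List.get_ofFn]
  have hi : i = 0 := by simp [hn] at h₁; omega
  subst hi
  rfl

lemma fin_len_c (i : Fin ([c] : List V3).length) : i = ⟨0, by simp⟩ := by
  apply Fin.ext
  show (i : ℕ) = 0
  have : (i : ℕ) < 1 := i.isLt
  omega

lemma step_c (k m : ℕ) :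
    detStep (k + 1) (P15 k m) [c] (List.replicate ((k + 1) * m) a) := by
  refine ⟨{⟨0, by simp⟩}, fun _ => List.replicate ((k + 1) * m) a, ?_, ?_, ?_, ?_⟩
  · intro x
    cases x with
    | a => simp
    | b => simp
    | c =>
      rw [Finset.filter_singleton]
      have h1 : List.count c [c] = 1 := by simp
      rw [h1]
      simp
  · intro i _
    show _ = P15 k m ([c].get i)
    rw [fin_len_c i]
    rfl
  · intro i hi
    exact absurd (fin_len_c i) (by simpa using hi)
  · rw [ofFn_one rfl]
    simp

lemma reach (k m : ℕ) : ∀ (d j : ℕ), j + d = m →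
    ∀ cs : List (List V3), cs.length = (k + 1) * m → (∀ x ∈ cs, x = [a] ∨ x = [b, b]) →
    cs.count [a] = (k + 1) * j →
    Relation.ReflTransGen (detStep (k + 1) (P15 k m)) [c] cs.flatten := by
  intro d
  induction d with
  | zero =>
    intro j hj cs hlen hb hcnt
    have hj' : m = j := by omega
    subst hj'
    have hall : cs = List.replicate ((k + 1) * m) [a] := by
      rw [List.eq_replicate_iff]
      refine ⟨hlen, ?_⟩
      have : cs.count [a] = cs.length := by rw [hcnt, hlen]
      exact fun x hx => (List.count_eq_length.mp this x hx).symm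
    rw [hall, flatten_replicate_a]
    exact Relation.ReflTransGen.single (step_c k m)
  | succ d ihd =>
    intro j hj cs hlen hb hcnt
    have hjm : j < m := by omega
    have hsum := blocks_count_sum cs hb
    have hbbcnt : (k + 1) ≤ cs.count [b, b] := by
      have h2 : (k + 1) * (j + 1) ≤ (k + 1) * m := Nat.mul_le_mul_left _ hjm
      have h3 : (k + 1) * (j + 1) = (k + 1) * j + (k + 1) := by ring
      omega
    have hf2 := repl_forall₂ (k + 1) cs
    have hbsb := repl_blocks (k + 1) cs hb
    have hbscnt : (repl (k + 1) cs).count [a] = (k + 1) * (j + 1) := by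
      rw [repl_count, hcnt, Nat.min_eq_left hbbcnt]
      ring
    have hbslen : (repl (k + 1) cs).length = (k + 1) * m := by
      rw [hf2.length_eq, hlen]
    have hreach := ihd (j + 1) (by omega) _ hbslen hbsb hbscnt
    refine hreach.tail ?_
    obtain ⟨r, hft, hcntr, heq⟩ := complD (repl (k + 1) cs) cs hf2 hbsb
    rw [step_iff k m _ _ (blocks_count_c _ hbsb)]
    refine ⟨r, hft, ?_, heq.symm⟩
    rw [blocks_count_a _ hbsb, hbscnt]
    have h3 : (k + 1) * (j + 1) = (k + 1) * j + (k + 1) := by ring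
    have h4 : min (k + 1) ((k + 1) * (j + 1)) = k + 1 :=
      Nat.min_eq_left (Nat.le_mul_of_pos_right _ (by omega))
    omega

lemma preserve (k m : ℕ) (v w : List V3) (hv : v ∈ Lm k m)
    (h : detStep (k + 1) (P15 k m) v w) : w ∈ Lm k m := by
  rcases hv with hv | ⟨bs, hlen, hb, ⟨j, hjm, hcnt⟩, rfl⟩
  · rw [Set.mem_singleton_iff] at hv
    subst hv
    obtain ⟨S, f, hcard, hR, hout, rfl⟩ := h
    have h0S : (⟨0, by simp⟩ : Fin ([c] : List V3).length) ∈ S := by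
      have hc1 := hcard c
      have h1 : List.count c [c] = 1 := by simp
      rw [h1] at hc1
      have h2 : min (k + 1) 1 = 1 := by omega
      rw [h2] at hc1
      obtain ⟨i, hi⟩ := Finset.card_pos.mp (by omega : 0 < (S.filter (fun i => [c].get i = c)).card)
      have hiS := (Finset.mem_filter.mp hi).1
      rwa [fin_len_c i] at hiS
    have hf0 : f ⟨0, by simp⟩ = List.replicate ((k + 1) * m) a := by
      have := hR _ h0S
      simpa [P15] using this
    have hofn : (List.ofFn f).flatten = List.replicate ((k + 1) * m) a := by
      rw [ofFn_one rfl, hf0]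
      simp
    rw [hofn]
    right
    exact ⟨List.replicate ((k + 1) * m) [a], by simp, by simp, ⟨m, le_refl m, by simp⟩,
      (flatten_replicate_a _).symm⟩
  · rw [step_iff k m _ _ (blocks_count_c bs hb)] at h
    obtain ⟨r, hft, hcntr, rfl⟩ := h
    obtain ⟨cs, hcslen, hcsb, hcscnt, heq⟩ := soundC bs r hb hft
    right
    rw [blocks_count_a bs hb, hcnt] at hcntr
    refine ⟨cs, by omega, hcsb, ⟨j - min 1 j, by omega, ?_⟩, heq⟩
    cases j with
    | zero =>
      simp at hcntr ⊢
      omega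
    | succ j' =>
      have h1 : min (k + 1) ((k + 1) * (j' + 1)) = k + 1 :=
        Nat.min_eq_left (Nat.le_mul_of_pos_right _ (by omega))
      rw [h1] at hcntr
      rw [hcnt] at hcscnt
      have h2 : (k + 1) * (j' + 1) = (k + 1) * j' + (k + 1) := by ring
      have h3 : j' + 1 - min 1 (j' + 1) = j' := by omega
      rw [h3]
      omega


/-- The (k+1)-limited PD0L system with axiom c and rules a→bb, b→b, c→a^{(k+1)m}
generates exactly L_m. -/
theorem stmt15 (k m : ℕ) (hk : 1 ≤ k) (hm : 1 ≤ m) :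
    lang (detStep (k + 1) (P15 k m)) [c] = Lm k m := by
  ext w
  constructor
  · intro hw
    have hw' : Relation.ReflTransGen (detStep (k + 1) (P15 k m)) [c] w := hw
    clear hw
    induction hw' with
    | refl => left; rfl
    | tail _ hstep ih => exact preserve k m _ _ ih hstep
  · intro hw
    rcases hw with hw | ⟨bs, hlen, hb, ⟨j, hjm, hcnt⟩, rfl⟩
    · rw [Set.mem_singleton_iff] at hw
      subst hw
      exact Relation.ReflTransGen.refl
    · exact reach k m (m - j) j (by omega) bs hlen hb hcnt
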